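/- Let A be a d×d real matrix such that the operator 2-norm ‖A^j‖ tends to 0 as j → ∞, let B be a d×p real matrix, 𝒵 ⊆ ℝ^p, and let P : ℝ^d → ℝⁿ be the projection onto the first n coordinates. Let C ⊆ ℝⁿ be a convex set such that: (i) there exists α > 0 with the closed Euclidean ball of radius α centered at 0 contained in C; and (ii) there exists β ∈ (0,1) such that for every N ∈ ℕ and every choice z₀, …, z_N ∈ 𝒵, the vector Σ_{i=0}^N P(A^i B z_i) belongs to β • C := {β • c : c ∈ C}. Let S ⊆ ℝⁿ be a bounded set and let ι : ℝⁿ → ℝ^d pad a vector with n_K = d − n trailing zeros. Then there exists T_max ∈ ℕ, T_max ≥ 1, such that for every x₀ ∈ S, every sequence z : ℕ → ℝ^p with z[i] ∈ 𝒵 for all i, and every j ≥ T_max, the vector P(A^j ι(x₀) + Σ_{i=0}^{j-1} A^{j-1-i} B z[i]) belongs to C. -/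

import Mathlib

open Pointwise

private lemma proj_norm_le {n nK : ℕ} (x : EuclideanSpace ℝ (Fin n))
    (v : EuclideanSpace ℝ (Fin (n + nK)))
    (h : ∀ i : Fin n, x i = v (Fin.castAdd nK i)) : ‖x‖ ≤ ‖v‖ := by
  rw [EuclideanSpace.norm_eq, EuclideanSpace.norm_eq]
  apply Real.sqrt_le_sqrt
  have hv : (∑ i : Fin (n + nK), ‖v i‖ ^ 2)
      = (∑ i : Fin n, ‖v (Fin.castAdd nK i)‖ ^ 2) + ∑ i : Fin nK, ‖v (Fin.natAdd n i)‖ ^ 2 :=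
    Fin.sum_univ_add _
  have h2 : (0:ℝ) ≤ ∑ i : Fin nK, ‖v (Fin.natAdd n i)‖ ^ 2 :=
    Finset.sum_nonneg fun _ _ => sq_nonneg _
  have hx : (∑ i : Fin n, ‖x i‖ ^ 2) = ∑ i : Fin n, ‖v (Fin.castAdd nK i)‖ ^ 2 :=
    Finset.sum_congr rfl fun i _ => by rw [h i]
  rw [hx, hv]
  linarith

/-- Uniform finite-time convergence (Theorem 1, point b)): if `‖A^j‖ → 0`
(Euclidean operator norm), `C` is convex, contains a ball `B̄_α`, and all
accumulated disturbances `Σ P(A^i B z_i)` lie in `β • C` with `β ∈ (0,1)`,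
then there is a uniform `T_max ≥ 1` such that for every bounded initial set
`S`, every `x₀ ∈ S`, every admissible disturbance sequence, and every
`j ≥ T_max`, the projected state at time `j` belongs to `C`. -/
theorem uniform_finite_time_entry
    (n nK p : ℕ)
    (A : Matrix (Fin (n + nK)) (Fin (n + nK)) ℝ)
    (hA : Filter.Tendsto (fun j : ℕ => ‖Matrix.toEuclideanCLM (𝕜 := ℝ) (A ^ j)‖)
      Filter.atTop (nhds 0))
    (B : Matrix (Fin (n + nK)) (Fin p) ℝ) (Z : Set (Fin p → ℝ))
    (C : Set (EuclideanSpace ℝ (Fin n))) (hC : Convex ℝ C)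
    (α : ℝ) (hα : 0 < α)
    (hball : Metric.closedBall (0 : EuclideanSpace ℝ (Fin n)) α ⊆ C)
    (β : ℝ) (hβ : β ∈ Set.Ioo (0 : ℝ) 1)
    (hacc : ∀ (N : ℕ) (z : ℕ → Fin p → ℝ), (∀ i, z i ∈ Z) →
      WithLp.toLp 2 (fun i : Fin n =>
        (∑ i' ∈ Finset.range (N + 1), (A ^ i').mulVec (B.mulVec (z i'))) (Fin.castAdd nK i))
        ∈ β • C)
    (S : Set (EuclideanSpace ℝ (Fin n))) (hS : Bornology.IsBounded S) :
    ∃ Tmax : ℕ, 1 ≤ Tmax ∧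
      ∀ x₀ ∈ S, ∀ z : ℕ → Fin p → ℝ, (∀ i, z i ∈ Z) → ∀ j, Tmax ≤ j →
        WithLp.toLp 2 (fun i : Fin n =>
          ((A ^ j).mulVec (Fin.append x₀ (0 : Fin nK → ℝ)) +
            ∑ i' ∈ Finset.range j, (A ^ (j - 1 - i')).mulVec (B.mulVec (z i')))
            (Fin.castAdd nK i)) ∈ C := by
  obtain ⟨hβ0, hβ1⟩ := hβ
  obtain ⟨M, hM⟩ := hS.exists_norm_le
  set M' : ℝ := max M 1 with hM'def
  have hM'1 : (1:ℝ) ≤ M' := le_max_right _ _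
  have hM'0 : (0:ℝ) < M' := lt_of_lt_of_le one_pos hM'1
  have hε : (0:ℝ) < (1 - β) * α / M' :=
    div_pos (mul_pos (by linarith) hα) hM'0
  obtain ⟨T, hT⟩ := (hA.eventually_lt_const hε).exists_forall_of_atTop
  refine ⟨max T 1, le_max_right _ _, ?_⟩
  intro x₀ hx₀ z hz j hj
  have hj1 : 1 ≤ j := le_trans (le_max_right T 1) hj
  have hjT : T ≤ j := le_trans (le_max_left T 1) hj
  set u : Fin (n + nK) → ℝ := (A ^ j).mulVec (Fin.append x₀ (0 : Fin nK → ℝ)) with hu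
  set s : Fin (n + nK) → ℝ :=
    ∑ i' ∈ Finset.range j, (A ^ (j - 1 - i')).mulVec (B.mulVec (z i')) with hs
  set eP : EuclideanSpace ℝ (Fin n) := WithLp.toLp 2 (fun i => u (Fin.castAdd nK i)) with heP
  set dP : EuclideanSpace ℝ (Fin n) := WithLp.toLp 2 (fun i => s (Fin.castAdd nK i)) with hdP
  have hsplit : (WithLp.toLp 2 (fun i : Fin n => (u + s) (Fin.castAdd nK i)) : EuclideanSpace ℝ (Fin n))
      = eP + dP := rfl
  show (WithLp.toLp 2 (fun i : Fin n => (u + s) (Fin.castAdd nK i)) : EuclideanSpace ℝ (Fin n)) ∈ C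
  rw [hsplit]
  -- the disturbance part lies in β • C
  have hd : dP ∈ β • C := by
    have hsum : s = ∑ i' ∈ Finset.range ((j - 1) + 1),
        (A ^ i').mulVec (B.mulVec ((fun k => z (j - 1 - k)) i')) := by
      rw [hs, Nat.sub_add_cancel hj1]
      rw [← Finset.sum_range_reflect (fun k => (A ^ k).mulVec (B.mulVec (z (j - 1 - k)))) j]
      refine Finset.sum_congr rfl fun k hk => ?_
      have hk' : k ≤ j - 1 := Nat.le_sub_one_of_lt (Finset.mem_range.1 hk)
      rw [Nat.sub_sub_self hk']
    have := hacc (j - 1) (fun k => z (j - 1 - k)) (fun k => hz _)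
    have heq : dP = WithLp.toLp 2 (fun i : Fin n =>
        (∑ i' ∈ Finset.range ((j - 1) + 1),
          (A ^ i').mulVec (B.mulVec ((fun k => z (j - 1 - k)) i'))) (Fin.castAdd nK i)) := by
      rw [hdP, hsum]
    rw [heq]
    exact this
  -- the free-evolution part is small
  have he : ‖eP‖ ≤ (1 - β) * α := by
    have h1 : ‖eP‖ ≤ ‖((WithLp.equiv 2 _).symm u : EuclideanSpace ℝ (Fin (n + nK)))‖ :=
      proj_norm_le eP ((WithLp.equiv 2 _).symm u) (fun i => rfl)
    have h2 : ((WithLp.equiv 2 _).symm u : EuclideanSpace ℝ (Fin (n + nK)))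
        = Matrix.toEuclideanCLM (𝕜 := ℝ) (A ^ j)
            ((WithLp.equiv 2 _).symm (Fin.append x₀ (0 : Fin nK → ℝ))) := by
      rfl
    have h3 : ‖((WithLp.equiv 2 _).symm (Fin.append x₀ (0 : Fin nK → ℝ))
        : EuclideanSpace ℝ (Fin (n + nK)))‖ = ‖x₀‖ := by
      rw [EuclideanSpace.norm_eq, EuclideanSpace.norm_eq]
      congr 1
      rw [Fin.sum_univ_add (fun i : Fin (n + nK) =>
        ‖((WithLp.equiv 2 _).symm (Fin.append x₀ (0 : Fin nK → ℝ))
          : EuclideanSpace ℝ (Fin (n + nK))) i‖ ^ 2)]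
      have hz0 : ∑ i : Fin nK,
          ‖(Fin.append x₀ (0 : Fin nK → ℝ)) (Fin.natAdd n i)‖ ^ 2 = 0 := by
        refine Finset.sum_eq_zero fun i _ => ?_
        rw [Fin.append_right]
        simp
      have hx : ∀ i : Fin n,
          (Fin.append x₀ (0 : Fin nK → ℝ)) (Fin.castAdd nK i) = x₀ i := fun i =>
        Fin.append_left _ _ i
      simp only [WithLp.equiv_symm_apply, PiLp.toLp_apply]
      rw [hz0, add_zero]
      exact Finset.sum_congr rfl fun i _ => by rw [hx i]
    have h4 : ‖Matrix.toEuclideanCLM (𝕜 := ℝ) (A ^ j)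
        ((WithLp.equiv 2 _).symm (Fin.append x₀ (0 : Fin nK → ℝ)))‖
        ≤ ‖Matrix.toEuclideanCLM (𝕜 := ℝ) (A ^ j)‖ * ‖x₀‖ := by
      rw [← h3]
      exact (Matrix.toEuclideanCLM (𝕜 := ℝ) (A ^ j)).le_opNorm _
    have hx₀M : ‖x₀‖ ≤ M' := le_trans (hM x₀ hx₀) (le_max_left _ _)
    have hnormA : ‖Matrix.toEuclideanCLM (𝕜 := ℝ) (A ^ j)‖ < (1 - β) * α / M' := hT j hjT
    have hnormA0 : 0 ≤ ‖Matrix.toEuclideanCLM (𝕜 := ℝ) (A ^ j)‖ := norm_nonneg _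
    calc ‖eP‖ ≤ ‖Matrix.toEuclideanCLM (𝕜 := ℝ) (A ^ j)‖ * ‖x₀‖ := by
          rw [h2] at h1; exact h1.trans h4
      _ ≤ ((1 - β) * α / M') * M' := by
          apply mul_le_mul (le_of_lt hnormA) hx₀M (norm_nonneg _) (le_of_lt hε)
      _ = (1 - β) * α := div_mul_cancel₀ _ (ne_of_gt hM'0)
  -- combine by convexity
  obtain ⟨c, hc, hdc⟩ := hd
  have h1β : (0:ℝ) < 1 - β := by linarith
  have hmem : (1 - β)⁻¹ • eP ∈ C := by
    apply hball
    rw [Metric.mem_closedBall, dist_zero_right, norm_smul, norm_inv,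
      Real.norm_of_nonneg (le_of_lt h1β)]
    rw [inv_mul_le_iff₀ h1β]
    linarith [he]
  have : (1 - β) • ((1 - β)⁻¹ • eP) + β • c ∈ C :=
    hC hmem hc (le_of_lt h1β) (le_of_lt hβ0) (by ring)
  rw [smul_inv_smul₀ (ne_of_gt h1β)] at this
  have hdc' : dP = β • c := hdc.symm
  rw [hdc']
  exact this
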